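/- Polynomial matrices give matrix reverse Hölder weights: Let n, d ≥ 1 and let V : ℝⁿ → ℝ^{d×d} be a matrix function each of whose entries is a polynomial of degree at most k. Then for every p with 1 < p < ∞, the matrix weight VᵀV belongs to the matrix reverse Hölder class 𝓑_p with a constant depending only on n and k; in fact there is C = C(n,k) such that for every cube Q ⊂ ℝⁿ and every e ∈ ℝᵈ, (⨍_Q ⟨Vᵀ(x)V(x)e,e⟩^p dx)^{1/p} ≤ C ⨍_Q ⟨Vᵀ(x)V(x)e,e⟩ dx. -/

import Mathlib

open MeasureTheory
open scoped ComplexOrder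

noncomputable section

/-- The open cube in `ℝⁿ` centered at `x` with half side length `r` (side length `2r`). -/
def cube {n : ℕ} (x : Fin n → ℝ) (r : ℝ) : Set (Fin n → ℝ) :=
  {y | ∀ i, |y i - x i| < r}

/-- Entrywise integral of a real matrix-valued function over a set. -/
def matInt {n d : ℕ} (V : (Fin n → ℝ) → Matrix (Fin d) (Fin d) ℝ)
    (s : Set (Fin n → ℝ)) : Matrix (Fin d) (Fin d) ℝ :=
  Matrix.of fun i j => ∫ y in s, V y i j

/-- Entrywise average of a real matrix-valued function over a set. -/
def matAvg {n d : ℕ} (V : (Fin n → ℝ) → Matrix (Fin d) (Fin d) ℝ)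
    (s : Set (Fin n → ℝ)) : Matrix (Fin d) (Fin d) ℝ :=
  Matrix.of fun i j => ⨍ y in s, V y i j

/-- The quadratic form `⟨A e, e⟩`. -/
def qf {d : ℕ} (A : Matrix (Fin d) (Fin d) ℝ) (e : Fin d → ℝ) : ℝ :=
  dotProduct e (A.mulVec e)

/-- Squared Euclidean norm of a real vector. -/
def vnormSq {d : ℕ} (e : Fin d → ℝ) : ℝ := ∑ i, e i ^ 2

/-- The Euclidean operator norm of a real square matrix (its largest singular value). -/
def matOpNorm {d : ℕ} (A : Matrix (Fin d) (Fin d) ℝ) : ℝ :=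
  sSup {t : ℝ | ∃ e : Fin d → ℝ, vnormSq e = 1 ∧ t = Real.sqrt (vnormSq (A.mulVec e))}

/-- `V` is a matrix weight: measurable, a.e. symmetric positive semidefinite, and with
locally integrable operator norm. -/
def IsMatrixWeight {n d : ℕ} (V : (Fin n → ℝ) → Matrix (Fin d) (Fin d) ℝ) : Prop :=
  (∀ i j, Measurable fun x => V x i j) ∧
  (∀ᵐ (x : Fin n → ℝ) ∂volume, (V x).PosSemidef) ∧
  ∀ (x : Fin n → ℝ) (r : ℝ), 0 < r → IntegrableOn (fun y => matOpNorm (V y)) (cube x r)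

/-- The matrix reverse Hölder class `𝓑_p` with constant `C`. -/
def MemBp {n d : ℕ} (p C : ℝ) (V : (Fin n → ℝ) → Matrix (Fin d) (Fin d) ℝ) : Prop :=
  (∀ (x : Fin n → ℝ) (r : ℝ), 0 < r →
    IntegrableOn (fun y => matOpNorm (V y) ^ p) (cube x r)) ∧
  ∀ (x : Fin n → ℝ) (r : ℝ), 0 < r → ∀ e : Fin d → ℝ,
    (⨍ y in cube x r, qf (V y) e ^ p) ^ (1 / p) ≤ C * qf (matAvg V (cube x r)) e

/-- The scalar reverse Hölder class `B_p` with constant `C`. -/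
def MemBpScalar {n : ℕ} (p C : ℝ) (v : (Fin n → ℝ) → ℝ) : Prop :=
  (∀ (x : Fin n → ℝ) (r : ℝ), 0 < r → IntegrableOn (fun y => v y ^ p) (cube x r)) ∧
  ∀ (x : Fin n → ℝ) (r : ℝ), 0 < r →
    (⨍ y in cube x r, v y ^ p) ^ (1 / p) ≤ C * ⨍ y in cube x r, v y

/-- The averaged matrix `Ψ(x,r;V) = r^{2-n} ∫_{Q(x,r)} V`. -/
def Psi {n d : ℕ} (x : Fin n → ℝ) (r : ℝ)
    (V : (Fin n → ℝ) → Matrix (Fin d) (Fin d) ℝ) : Matrix (Fin d) (Fin d) ℝ :=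
  r ^ ((2 : ℝ) - n) • matInt V (cube x r)

/-- The nondegeneracy class `ND`. -/
def MemND {n d : ℕ} (V : (Fin n → ℝ) → Matrix (Fin d) (Fin d) ℝ) : Prop :=
  ∀ E : Set (Fin n → ℝ), MeasurableSet E → 0 < volume E → (matInt V E).PosDef

/-- The set of radii used to define the lower auxiliary function. -/
def lowerSet {n d : ℕ} (V : (Fin n → ℝ) → Matrix (Fin d) (Fin d) ℝ)
    (x : Fin n → ℝ) : Set ℝ :=
  {r : ℝ | 0 < r ∧ ∃ e : Fin d → ℝ, vnormSq e = 1 ∧ qf (Psi x r V) e ≤ 1}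

/-- The lower auxiliary function `m̲(x,V)`. -/
def mLower {n d : ℕ} (V : (Fin n → ℝ) → Matrix (Fin d) (Fin d) ℝ) (x : Fin n → ℝ) : ℝ :=
  (sSup (lowerSet V x))⁻¹

/-- The set of radii used to define the upper auxiliary function. -/
def upperSet {n d : ℕ} (V : (Fin n → ℝ) → Matrix (Fin d) (Fin d) ℝ)
    (x : Fin n → ℝ) : Set ℝ :=
  {r : ℝ | 0 < r ∧ matOpNorm (Psi x r V) ≤ 1}

/-- The upper auxiliary function `m̄(x,V)`. -/
def mUpper {n d : ℕ} (V : (Fin n → ℝ) → Matrix (Fin d) (Fin d) ℝ) (x : Fin n → ℝ) : ℝ :=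
  (sSup (upperSet V x))⁻¹

/-- The set of radii used to define the scalar auxiliary function. -/
def scalSet {n : ℕ} (v : (Fin n → ℝ) → ℝ) (x : Fin n → ℝ) : Set ℝ :=
  {r : ℝ | 0 < r ∧ r ^ ((2 : ℝ) - n) * ∫ y in cube x r, v y ≤ 1}

/-- The scalar auxiliary function `m(x,v)`. -/
def mScal {n : ℕ} (v : (Fin n → ℝ) → ℝ) (x : Fin n → ℝ) : ℝ :=
  (sSup (scalSet v x))⁻¹

/-- The positive semidefinite square root of a matrix (junk value `0` off the
positive semidefinite matrices). -/
def msqrt {d : ℕ} (A : Matrix (Fin d) (Fin d) ℝ) : Matrix (Fin d) (Fin d) ℝ :=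
  @dite _ A.PosSemidef (Classical.dec _) (fun h => h.1.eigenvectorUnitary.1 *
    Matrix.diagonal ((↑) ∘ (Real.sqrt ∘ h.1.eigenvalues)) *
    (star h.1.eigenvectorUnitary : Matrix (Fin d) (Fin d) ℝ)) fun _ => 0

/-- The noncommutativity class `NC` with constant `N`. -/
def MemNC {n d : ℕ} (N : ℝ) (V : (Fin n → ℝ) → Matrix (Fin d) (Fin d) ℝ) : Prop :=
  ∀ (x : Fin n → ℝ) (e : Fin d → ℝ),
    N * vnormSq e ≤
      ∫ y in cube x (mLower V x)⁻¹,
        qf (msqrt (V y) * (matInt V (cube x (mLower V x)⁻¹))⁻¹ * msqrt (V y)) e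

/-- The matrix `𝓐_∞` class. -/
def MemAinf {n d : ℕ} (V : (Fin n → ℝ) → Matrix (Fin d) (Fin d) ℝ) : Prop :=
  ∀ ε : ℝ, 0 < ε → ∃ δ : ℝ, 0 < δ ∧ ∀ (x : Fin n → ℝ) (r : ℝ), 0 < r →
    ENNReal.ofReal (1 - ε) * volume (cube x r) ≤
      volume {y ∈ cube x r | (V y - δ • matAvg V (cube x r)).PosSemidef}

/-- The smallest eigenvalue of a symmetric matrix (as the infimum of the Rayleigh
quotient over the unit sphere). -/
def lam1 {d : ℕ} (A : Matrix (Fin d) (Fin d) ℝ) : ℝ :=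
  sInf {t : ℝ | ∃ e : Fin d → ℝ, vnormSq e = 1 ∧ t = qf A e}

/-- Squared Frobenius norm of the Jacobian matrix `Du(x)`. -/
def jacFrobSq {n d : ℕ} (u : (Fin n → ℝ) → Fin d → ℝ) (x : Fin n → ℝ) : ℝ :=
  ∑ j, ∑ i, (fderiv ℝ u x (Pi.single i 1) j) ^ 2

/-! ### Complex (Hermitian) versions -/

/-- The (real-valued) quadratic form `⟨A e, e⟩` of a Hermitian matrix. -/
def qfC {d : ℕ} (A : Matrix (Fin d) (Fin d) ℂ) (e : Fin d → ℂ) : ℝ :=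
  (dotProduct (star e) (A.mulVec e)).re

/-- Squared Euclidean norm of a complex vector. -/
def vnormSqC {d : ℕ} (e : Fin d → ℂ) : ℝ := ∑ i, Complex.normSq (e i)

/-- Entrywise integral of a complex matrix-valued function over a set. -/
def matIntC {n d : ℕ} (V : (Fin n → ℝ) → Matrix (Fin d) (Fin d) ℂ)
    (s : Set (Fin n → ℝ)) : Matrix (Fin d) (Fin d) ℂ :=
  Matrix.of fun i j => ∫ y in s, V y i j

/-- Entrywise average of a complex matrix-valued function over a set. -/
def matAvgC {n d : ℕ} (V : (Fin n → ℝ) → Matrix (Fin d) (Fin d) ℂ)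
    (s : Set (Fin n → ℝ)) : Matrix (Fin d) (Fin d) ℂ :=
  Matrix.of fun i j => ⨍ y in s, V y i j

/-- The Euclidean operator norm of a complex square matrix. -/
def matOpNormC {d : ℕ} (A : Matrix (Fin d) (Fin d) ℂ) : ℝ :=
  sSup {t : ℝ | ∃ e : Fin d → ℂ, vnormSqC e = 1 ∧ t = Real.sqrt (vnormSqC (A.mulVec e))}

/-- `V` is a Hermitian matrix weight. -/
def IsHermWeight {n d : ℕ} (V : (Fin n → ℝ) → Matrix (Fin d) (Fin d) ℂ) : Prop :=
  (∀ i j, Measurable fun x => V x i j) ∧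
  (∀ᵐ (x : Fin n → ℝ) ∂volume, (V x).PosSemidef) ∧
  ∀ (x : Fin n → ℝ) (r : ℝ), 0 < r → IntegrableOn (fun y => matOpNormC (V y)) (cube x r)

/-- The nondegeneracy class `ND` for Hermitian weights. -/
def MemNDC {n d : ℕ} (V : (Fin n → ℝ) → Matrix (Fin d) (Fin d) ℂ) : Prop :=
  ∀ E : Set (Fin n → ℝ), MeasurableSet E → 0 < volume E → (matIntC V E).PosDef

/-- The matrix `𝓐_∞` class for Hermitian weights. -/
def MemAinfC {n d : ℕ} (V : (Fin n → ℝ) → Matrix (Fin d) (Fin d) ℂ) : Prop :=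
  ∀ ε : ℝ, 0 < ε → ∃ δ : ℝ, 0 < δ ∧ ∀ (x : Fin n → ℝ) (r : ℝ), 0 < r →
    ENNReal.ofReal (1 - ε) * volume (cube x r) ≤
      volume {y ∈ cube x r | (V y - δ • matAvgC V (cube x r)).PosSemidef}

/-- The geometric average `exp(⨍_s ln w)` of a nonnegative function, with the
conventions `ln 0 = -∞` and `exp (-∞) = 0`. -/
def geomMean {n : ℕ} (w : (Fin n → ℝ) → ℝ) (s : Set (Fin n → ℝ)) : ℝ :=
  @ite _ ((∀ᵐ y ∂(volume.restrict s), 0 < w y) ∧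
      IntegrableOn (fun y => Real.log (w y)) s) (Classical.dec _)
    (Real.exp (⨍ y in s, Real.log (w y))) 0

/-- The scalar `A_∞` class. -/
def ScalarAinf {n : ℕ} (w : (Fin n → ℝ) → ℝ) : Prop :=
  ∀ ε : ℝ, 0 < ε → ∃ δ : ℝ, 0 < δ ∧ ∀ (x : Fin n → ℝ) (r : ℝ), 0 < r →
    ENNReal.ofReal (1 - ε) * volume (cube x r) ≤
      volume {y ∈ cube x r | δ * ⨍ z in cube x r, w z ≤ w y}

end

namespace S15
noncomputable section
open MvPolynomial

variable {n : ℕ}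

lemma cube_eq_pi (x : Fin n → ℝ) (r : ℝ) :
    cube x r = Set.univ.pi (fun i => Set.Ioo (x i - r) (x i + r)) := by
  ext y
  simp only [cube, Set.mem_setOf_eq, Set.mem_pi, Set.mem_univ, Set.mem_Ioo, true_implies]
  refine forall_congr' fun i => ?_
  rw [abs_lt]
  constructor <;> intro h <;> constructor <;> linarith [h.1, h.2]

lemma isOpen_cube (x : Fin n → ℝ) (r : ℝ) : IsOpen (cube x r) := by
  rw [cube_eq_pi]
  exact isOpen_set_pi Set.finite_univ fun i _ => isOpen_Ioo

lemma measurableSet_cube (x : Fin n → ℝ) (r : ℝ) : MeasurableSet (cube x r) :=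
  (isOpen_cube x r).measurableSet

lemma volume_cube (x : Fin n → ℝ) (r : ℝ) :
    volume (cube x r) = ENNReal.ofReal (2 * r) ^ n := by
  rw [cube_eq_pi, volume_pi_pi]
  simp [Real.volume_Ioo]
  ring_nf
  rw [ENNReal.ofReal_mul' (by norm_num : (0:ℝ) ≤ 2), mul_pow, ENNReal.ofReal_ofNat]

lemma volume_cube_toReal (x : Fin n → ℝ) {r : ℝ} (hr : 0 ≤ r) :
    (volume (cube x r)).toReal = (2 * r) ^ n := by
  rw [volume_cube, ENNReal.toReal_pow, ENNReal.toReal_ofReal (by positivity)]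

lemma volume_cube_pos (x : Fin n → ℝ) {r : ℝ} (hr : 0 < r) : 0 < volume (cube x r) := by
  refine (isOpen_cube x r).measure_pos volume ⟨x, fun i => by simpa using hr⟩

lemma volume_cube_lt_top (x : Fin n → ℝ) (r : ℝ) : volume (cube x r) < ⊤ := by
  rw [volume_cube]
  exact ENNReal.pow_lt_top ENNReal.ofReal_lt_top

lemma cube_subset_Icc (x : Fin n → ℝ) (r : ℝ) :
    cube x r ⊆ Set.Icc (fun i => x i - r) (fun i => x i + r) := by
  intro y hy
  refine ⟨fun i => ?_, fun i => ?_⟩ <;> have := abs_lt.1 (hy i)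
  · show x i - r ≤ y i; linarith [this.1]
  · show y i ≤ x i + r; linarith [this.2]

lemma integrableOn_cube {f : (Fin n → ℝ) → ℝ} (hf : Continuous f) (x : Fin n → ℝ) (r : ℝ) :
    IntegrableOn f (cube x r) := by
  refine IntegrableOn.mono_set ?_ (cube_subset_Icc x r)
  exact hf.continuousOn.integrableOn_compact isCompact_Icc





def expo (e : Fin n → Fin (m+1)) : Fin n →₀ ℕ :=
  Finsupp.equivFunOnFinite.symm (fun i => (e i : ℕ))

lemma expo_injective : Function.Injective (expo (n := n) (m := m)) := by
  intro a b h
  funext i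
  have := congrArg (fun s => s i) h
  simpa [expo, Fin.val_injective.eq_iff] using Fin.val_injective (by simpa [expo] using this)

def polyOf (c : (Fin n → Fin (m+1)) → ℝ) : MvPolynomial (Fin n) ℝ :=
  ∑ e, monomial (expo e) (c e)

lemma coeff_polyOf (c : (Fin n → Fin (m+1)) → ℝ) (e₀ : Fin n → Fin (m+1)) :
    coeff (expo e₀) (polyOf c) = c e₀ := by
  rw [polyOf, MvPolynomial.coeff_sum]
  rw [Finset.sum_eq_single e₀]
  · simp [coeff_monomial]
  · intro b _ hb
    rw [coeff_monomial, if_neg (fun h => hb (expo_injective h))]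
  · simp

lemma polyOf_eq_zero {c : (Fin n → Fin (m+1)) → ℝ} (h : polyOf c = 0) : c = 0 := by
  funext e
  have := coeff_polyOf c e
  rw [h] at this
  simpa using this.symm

lemma polyOf_sub (c c' : (Fin n → Fin (m+1)) → ℝ) :
    polyOf (c - c') = polyOf c - polyOf c' := by
  simp [polyOf, Finset.sum_sub_distrib, map_sub]

lemma polyOf_smul (a : ℝ) (c : (Fin n → Fin (m+1)) → ℝ) :
    polyOf (a • c) = a • polyOf c := by
  simp [polyOf, Finset.smul_sum, smul_monomial, smul_eq_mul]

lemma polyOf_rep {g : MvPolynomial (Fin n) ℝ} (hg : g.totalDegree ≤ m) :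
    polyOf (m := m) (fun e => coeff (expo e) g) = g := by
  apply MvPolynomial.ext
  intro s
  by_cases hs : ∃ e : Fin n → Fin (m+1), expo e = s
  · obtain ⟨e, rfl⟩ := hs
    rw [coeff_polyOf]
  · -- s has some exponent > m, so both sides vanish
    have hbig : ¬ (∀ i, s i ≤ m) := by
      intro hall
      exact hs ⟨fun i => ⟨s i, Nat.lt_succ_of_le (hall i)⟩, by
        apply Finsupp.ext; intro i; simp [expo]⟩
    push_neg at hbig
    obtain ⟨i, hi⟩ := hbig
    have h1 : coeff s g = 0 := by
      by_contra hne
      have hsup : s ∈ g.support := by simpa [MvPolynomial.mem_support_iff] using hne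
      have hle : s i ≤ ∑ j ∈ s.support, s j := by
        rcases Nat.eq_zero_or_pos (s i) with h0 | hpos
        · omega
        · exact Finset.single_le_sum (f := fun j => s j) (fun _ _ => Nat.zero_le _)
            (Finsupp.mem_support_iff.2 (by omega))
      have : s i ≤ g.totalDegree := by
        calc s i ≤ s.sum fun _ k => k := by rw [Finsupp.sum]; exact hle
        _ ≤ g.totalDegree := MvPolynomial.le_totalDegree hsup
      omega
    have h2 : coeff s (polyOf (m := m) fun e => coeff (expo e) g) = 0 := by
      rw [polyOf, MvPolynomial.coeff_sum]
      apply Finset.sum_eq_zero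
      intro e _
      rw [coeff_monomial, if_neg (fun h => hs ⟨e, h⟩)]
    rw [h1, h2]



variable {n m : ℕ}

lemma abs_le_one_of_mem_cube01 {y : Fin n → ℝ} (hy : y ∈ cube 0 1) (i : Fin n) : |y i| ≤ 1 := by
  have := hy i
  simp only [Pi.zero_apply, sub_zero] at this
  exact this.le

lemma eval_polyOf_eq (c : (Fin n → Fin (m+1)) → ℝ) (y : Fin n → ℝ) :
    MvPolynomial.eval y (polyOf c) = ∑ e, c e * (expo e).prod fun i k => y i ^ k := by
  simp [polyOf, MvPolynomial.eval_monomial]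

lemma abs_eval_polyOf_le (c : (Fin n → Fin (m+1)) → ℝ) {y : Fin n → ℝ} (hy : y ∈ cube 0 1) :
    |MvPolynomial.eval y (polyOf c)| ≤ (Fintype.card (Fin n → Fin (m+1)) : ℝ) * ‖c‖ := by
  rw [eval_polyOf_eq]
  calc |∑ e, c e * (expo e).prod fun i k => y i ^ k|
      ≤ ∑ e, |c e * (expo e).prod fun i k => y i ^ k| := Finset.abs_sum_le_sum_abs _ _
    _ ≤ ∑ e : Fin n → Fin (m+1), ‖c‖ * 1 := by
        apply Finset.sum_le_sum
        intro e _
        rw [abs_mul]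
        apply mul_le_mul
        · exact norm_le_pi_norm c e |>.trans_eq' (Real.norm_eq_abs _).symm
        · rw [Finsupp.prod, Finset.abs_prod]
          apply Finset.prod_le_one (fun _ _ => abs_nonneg _)
          intro i _
          rw [abs_pow]
          exact pow_le_one₀ (abs_nonneg _) (abs_le_one_of_mem_cube01 hy i)
        · exact abs_nonneg _
        · exact norm_nonneg _
    _ = (Fintype.card (Fin n → Fin (m+1)) : ℝ) * ‖c‖ := by
        simp [Finset.sum_const, Finset.card_univ, mul_comm]

def Phi (n m : ℕ) (c : (Fin n → Fin (m+1)) → ℝ) : ℝ :=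
  ∫ y in cube (0 : Fin n → ℝ) 1, |MvPolynomial.eval y (polyOf c)|

lemma continuous_evalP (g : MvPolynomial (Fin n) ℝ) : Continuous fun y : Fin n → ℝ => MvPolynomial.eval y g :=
  MvPolynomial.continuous_eval g

lemma phi_lipschitz_aux (c c' : (Fin n → Fin (m+1)) → ℝ) :
    Phi n m c ≤ Phi n m c' + (2:ℝ)^n * ((Fintype.card (Fin n → Fin (m+1)) : ℝ) * ‖c - c'‖) := by
  have hint : ∀ b : (Fin n → Fin (m+1)) → ℝ, IntegrableOn
      (fun y => |MvPolynomial.eval y (polyOf b)|) (cube (0 : Fin n → ℝ) 1) :=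
    fun b => integrableOn_cube ((continuous_evalP _).abs) _ _
  have step : Phi n m c ≤ ∫ y in cube (0 : Fin n → ℝ) 1,
      (|MvPolynomial.eval y (polyOf c')| + (Fintype.card (Fin n → Fin (m+1)) : ℝ) * ‖c - c'‖) := by
    apply setIntegral_mono_on (hint c) ((hint c').add (integrableOn_const (volume_cube_lt_top _ _).ne))
      (measurableSet_cube _ _)
    intro y hy
    have h1 : |MvPolynomial.eval y (polyOf c)| ≤ |MvPolynomial.eval y (polyOf c')|
        + |MvPolynomial.eval y (polyOf (c - c'))| := by
      rw [polyOf_sub]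
      simpa using abs_add_le (MvPolynomial.eval y (polyOf c')) (MvPolynomial.eval y (polyOf c) - MvPolynomial.eval y (polyOf c'))
        |>.trans_eq' (by ring_nf)
    exact h1.trans (add_le_add le_rfl (abs_eval_polyOf_le _ hy))
  rw [integral_add (hint c') (integrableOn_const (volume_cube_lt_top _ _).ne)] at step
  have hconst : ∫ _y in cube (0 : Fin n → ℝ) 1, ((Fintype.card (Fin n → Fin (m+1)) : ℝ) * ‖c - c'‖)
      = (2:ℝ)^n * ((Fintype.card (Fin n → Fin (m+1)) : ℝ) * ‖c - c'‖) := by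
    rw [setIntegral_const, smul_eq_mul, measureReal_def, volume_cube_toReal _ (by norm_num : (0:ℝ) ≤ 1)]
    norm_num
  rwa [hconst] at step

lemma phi_continuous : Continuous (Phi n m) := by
  set K : ℝ := (2:ℝ)^n * (Fintype.card (Fin n → Fin (m+1)) : ℝ) with hK
  have hK0 : 0 ≤ K := by positivity
  apply (LipschitzWith.of_dist_le_mul (K := K.toNNReal) ?_).continuous
  intro c c'
  rw [Real.dist_eq, dist_eq_norm, Real.coe_toNNReal _ hK0]
  have hKr : K * ‖c - c'‖ = (2:ℝ)^n * ((Fintype.card (Fin n → Fin (m+1)) : ℝ) * ‖c - c'‖) := by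
    rw [hK]; ring
  rw [abs_sub_le_iff, hKr]
  constructor
  · linarith [phi_lipschitz_aux (n := n) (m := m) c c']
  · have := phi_lipschitz_aux (n := n) (m := m) c' c
    rw [show c' - c = -(c - c') by ring, norm_neg] at this
    linarith [this]

lemma phi_smul {a : ℝ} (ha : 0 ≤ a) (c : (Fin n → Fin (m+1)) → ℝ) :
    Phi n m (a • c) = a * Phi n m c := by
  unfold Phi
  rw [← smul_eq_mul, ← integral_smul]
  congr 1
  funext y
  rw [polyOf_smul, MvPolynomial.smul_eval, abs_mul, abs_of_nonneg ha, smul_eq_mul]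

lemma phi_nonneg (c : (Fin n → Fin (m+1)) → ℝ) : 0 ≤ Phi n m c :=
  setIntegral_nonneg (measurableSet_cube _ _) (fun _ _ => abs_nonneg _)

lemma phi_pos {c : (Fin n → Fin (m+1)) → ℝ} (hc : c ≠ 0) : 0 < Phi n m c := by
  rcases lt_or_eq_of_le (phi_nonneg c) with h | h
  · exact h
  exfalso
  set f : (Fin n → ℝ) → ℝ := fun y => MvPolynomial.eval y (polyOf c) with hf
  have hfc : Continuous f := continuous_evalP _
  have hzero : (fun y => |f y|) =ᵐ[volume.restrict (cube (0 : Fin n → ℝ) 1)] 0 := by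
    rw [← integral_eq_zero_iff_of_nonneg_ae]
    · exact h.symm
    · exact Filter.Eventually.of_forall fun y => abs_nonneg _
    · exact integrableOn_cube hfc.abs _ _
  -- f vanishes on the open cube
  have hEq : ∀ y ∈ cube (0 : Fin n → ℝ) 1, f y = 0 := by
    by_contra hcon
    push_neg at hcon
    obtain ⟨y₀, hy₀, hfy₀⟩ := hcon
    set U : Set (Fin n → ℝ) := cube (0 : Fin n → ℝ) 1 ∩ {y | f y ≠ 0} with hU
    have hUopen : IsOpen U := (isOpen_cube _ _).inter (isOpen_ne_fun hfc continuous_const)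
    have hUpos : 0 < volume U := hUopen.measure_pos volume ⟨y₀, hy₀, hfy₀⟩
    have : volume U = 0 := by
      have hmeas : MeasurableSet {y | f y ≠ 0} := (isOpen_ne_fun hfc continuous_const).measurableSet
      have h2 : volume.restrict (cube (0 : Fin n → ℝ) 1) {y | f y ≠ 0} = 0 := by
        have : {y | ¬ (|f y| = (0 : ((Fin n → ℝ)) → ℝ) y)} = {y | f y ≠ 0} := by
          ext y; simp [abs_eq_zero]
        have h3 := hzero
        rw [Filter.EventuallyEq, MeasureTheory.ae_iff] at h3
        rwa [this] at h3
      rw [Measure.restrict_apply hmeas] at h2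
      rw [hU, Set.inter_comm]
      exact h2
    exact absurd this hUpos.ne'
  have hAn : AnalyticOnNhd ℝ f Set.univ := AnalyticOnNhd.eval_mvPolynomial (polyOf c)
  have hev : f =ᶠ[nhds (0 : Fin n → ℝ)] 0 := by
    filter_upwards [(isOpen_cube (0 : Fin n → ℝ) 1).mem_nhds (by intro i; simp)] with y hy
    exact hEq y hy
  have hall : Set.EqOn f 0 Set.univ :=
    hAn.eqOn_zero_of_preconnected_of_eventuallyEq_zero isPreconnected_univ (Set.mem_univ 0) hev
  have : polyOf c = 0 := MvPolynomial.funext fun y => by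
    simpa using hall (Set.mem_univ y)
  exact hc (polyOf_eq_zero this)

lemma exists_key (n m : ℕ) : ∃ v : ℝ, 0 < v ∧
    ∀ c : (Fin n → Fin (m+1)) → ℝ, v * ‖c‖ ≤ Phi n m c := by
  have hco : IsCompact (Metric.sphere (0 : (Fin n → Fin (m+1)) → ℝ) 1) := isCompact_sphere _ _
  have hne : (Metric.sphere (0 : (Fin n → Fin (m+1)) → ℝ) 1).Nonempty :=
    NormedSpace.sphere_nonempty.mpr zero_le_one
  obtain ⟨c₀, hc₀S, hmin⟩ := hco.exists_isMinOn hne phi_continuous.continuousOn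
  have hc₀ : c₀ ≠ 0 := by
    intro h0
    have := mem_sphere_zero_iff_norm.mp hc₀S
    rw [h0] at this; simp at this
  refine ⟨Phi n m c₀, phi_pos hc₀, fun c => ?_⟩
  rcases eq_or_ne c 0 with rfl | hc
  · have : polyOf (0 : (Fin n → Fin (m+1)) → ℝ) = 0 := by simp [polyOf]
    simp [Phi, this]
  · have hnc : (0:ℝ) < ‖c‖ := norm_pos_iff.mpr hc
    have hu : ‖c‖⁻¹ • c ∈ Metric.sphere (0 : (Fin n → Fin (m+1)) → ℝ) 1 := by
      rw [mem_sphere_zero_iff_norm, norm_smul, norm_inv, norm_norm]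
      field_simp
    have := hmin hu
    have h2 : Phi n m c₀ ≤ Phi n m (‖c‖⁻¹ • c) := this
    rw [phi_smul (by positivity)] at h2
    calc Phi n m c₀ * ‖c‖ ≤ (‖c‖⁻¹ * Phi n m c) * ‖c‖ := by nlinarith
    _ = Phi n m c := by field_simp

lemma mem_cube_shift (x : Fin n → ℝ) {r : ℝ} (hr : 0 < r) (z : Fin n → ℝ) :
    x + r • z ∈ cube x r ↔ z ∈ cube 0 1 := by
  simp only [cube, Set.mem_setOf_eq, Pi.add_apply, Pi.smul_apply, smul_eq_mul,
    Pi.zero_apply, sub_zero, add_sub_cancel_left]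
  refine forall_congr' fun i => ?_
  rw [abs_mul, abs_of_pos hr]
  constructor
  · intro h
    have := (mul_lt_iff_lt_one_right hr).mp h
    simpa using this
  · intro h
    calc r * |z i| < r * 1 := by exact (mul_lt_mul_iff_right₀ hr).2 h
    _ = r := mul_one r

lemma setIntegral_cube_comp (f : (Fin n → ℝ) → ℝ) (x : Fin n → ℝ) {r : ℝ} (hr : 0 < r) :
    ∫ y in cube x r, f y = r ^ n * ∫ z in cube (0 : Fin n → ℝ) 1, f (x + r • z) := by
  have h0 : ∫ z in cube (0 : Fin n → ℝ) 1, f (x + r • z)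
      = ∫ z, (cube x r).indicator f (x + r • z) := by
    rw [← MeasureTheory.integral_indicator (measurableSet_cube 0 1)]
    congr 1
    funext z
    by_cases hz : z ∈ cube (0 : Fin n → ℝ) 1
    · rw [Set.indicator_of_mem hz, Set.indicator_of_mem ((mem_cube_shift x hr z).2 hz)]
    · rw [Set.indicator_of_notMem hz,
        Set.indicator_of_notMem (fun h => hz ((mem_cube_shift x hr z).1 h))]
  have h1 : ∫ z, (fun w => (cube x r).indicator f (x + w)) (r • z)
      = |(r ^ Module.finrank ℝ (Fin n → ℝ))⁻¹| • ∫ w, (cube x r).indicator f (x + w) :=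
    MeasureTheory.Measure.integral_comp_smul volume (fun w => (cube x r).indicator f (x + w)) r
  have h2 : ∫ w, (cube x r).indicator f (x + w) = ∫ w, (cube x r).indicator f w :=
    MeasureTheory.integral_add_left_eq_self ((cube x r).indicator f) x
  have h3 : ∫ w, (cube x r).indicator f w = ∫ y in cube x r, f y :=
    MeasureTheory.integral_indicator (measurableSet_cube x r)
  rw [h0]
  have h4 : ∫ z, (cube x r).indicator f (x + r • z)
      = |(r ^ n)⁻¹| • ∫ y in cube x r, f y := by
    rw [show (fun z => (cube x r).indicator f (x + r • z))
        = fun z => (fun w => (cube x r).indicator f (x + w)) (r • z) from rfl] at *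
    rw [h1, h2, h3, Module.finrank_fin_fun]
  rw [h4, smul_eq_mul, abs_of_pos (by positivity : (0:ℝ) < (r ^ n)⁻¹)]
  field_simp

lemma setAverage_cube_comp (f : (Fin n → ℝ) → ℝ) (x : Fin n → ℝ) {r : ℝ} (hr : 0 < r) :
    ⨍ y in cube x r, f y = ⨍ z in cube (0 : Fin n → ℝ) 1, f (x + r • z) := by
  rw [setAverage_eq, setAverage_eq, smul_eq_mul, smul_eq_mul, measureReal_def, measureReal_def,
    volume_cube_toReal _ hr.le, volume_cube_toReal _ (by norm_num : (0:ℝ) ≤ 1),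
    setIntegral_cube_comp f x hr]
  rw [mul_pow]
  have h2 : (0:ℝ) < 2 ^ n := by positivity
  have hrn : (0:ℝ) < r ^ n := by positivity
  field_simp

lemma eval_comp_affine (g : MvPolynomial (Fin n) ℝ) (x z : Fin n → ℝ) (r : ℝ) :
    MvPolynomial.eval z (MvPolynomial.bind₁
      (fun i => MvPolynomial.C (x i) + MvPolynomial.C r * MvPolynomial.X i) g)
    = MvPolynomial.eval (x + r • z) g := by
  have hae : ∀ (w : Fin n → ℝ) (p : MvPolynomial (Fin n) ℝ),
      MvPolynomial.aeval w p = MvPolynomial.eval w p := by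
    intro w p
    rw [MvPolynomial.aeval_def, MvPolynomial.eval, Algebra.algebraMap_self]
    rfl
  rw [← hae, MvPolynomial.aeval_bind₁]
  have harg : (fun i => MvPolynomial.aeval z
      (MvPolynomial.C (x i) + MvPolynomial.C r * MvPolynomial.X i)) = x + r • z := by
    funext i
    simp [hae]
  rw [harg, hae]

lemma totalDegree_comp_affine_le (g : MvPolynomial (Fin n) ℝ) (x : Fin n → ℝ) (r : ℝ) :
    (MvPolynomial.bind₁
      (fun i => MvPolynomial.C (x i) + MvPolynomial.C r * MvPolynomial.X i) g).totalDegree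
      ≤ g.totalDegree := by
  set f : Fin n → MvPolynomial (Fin n) ℝ :=
    fun i => MvPolynomial.C (x i) + MvPolynomial.C r * MvPolynomial.X i with hfdef
  have hf : ∀ i, (f i).totalDegree ≤ 1 := by
    intro i
    refine (MvPolynomial.totalDegree_add _ _).trans (max_le (by simp) ?_)
    refine (MvPolynomial.totalDegree_mul _ _).trans ?_
    simp [MvPolynomial.totalDegree_X]
  conv_lhs => rw [g.as_sum, map_sum]
  apply MvPolynomial.totalDegree_finsetSum_le
  intro v hv
  rw [MvPolynomial.bind₁_monomial]
  refine (MvPolynomial.totalDegree_mul _ _).trans ?_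
  rw [MvPolynomial.totalDegree_C, zero_add]
  refine (MvPolynomial.totalDegree_finset_prod _ _).trans ?_
  calc ∑ i ∈ v.support, (f i ^ v i).totalDegree
      ≤ ∑ i ∈ v.support, v i := by
        apply Finset.sum_le_sum
        intro i _
        refine (MvPolynomial.totalDegree_pow _ _).trans ?_
        calc v i * (f i).totalDegree ≤ v i * 1 := Nat.mul_le_mul_left _ (hf i)
        _ = v i := Nat.mul_one _
    _ = v.sum fun _ k => k := by rw [Finsupp.sum]
    _ ≤ g.totalDegree := MvPolynomial.le_totalDegree hv

lemma core01 (n m : ℕ) : ∃ C : ℝ, 1 ≤ C ∧ ∀ g : MvPolynomial (Fin n) ℝ, g.totalDegree ≤ m →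
    (∀ y, 0 ≤ MvPolynomial.eval y g) → ∀ y ∈ cube (0 : Fin n → ℝ) 1,
      MvPolynomial.eval y g ≤ C * ⨍ z in cube (0 : Fin n → ℝ) 1, MvPolynomial.eval z g := by
  obtain ⟨v, hv, hkey⟩ := exists_key n m
  set card : ℝ := (Fintype.card (Fin n → Fin (m+1)) : ℝ) with hcard
  refine ⟨max 1 (card * (2:ℝ)^n / v), le_max_left _ _, ?_⟩
  intro g hg hpos y hy
  set c : (Fin n → Fin (m+1)) → ℝ := fun e => MvPolynomial.coeff (expo e) g with hc
  have hrep : polyOf (m := m) c = g := polyOf_rep hg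
  have hPhi : Phi n m c = ∫ z in cube (0 : Fin n → ℝ) 1, MvPolynomial.eval z g := by
    unfold Phi
    rw [hrep]
    refine setIntegral_congr_fun (measurableSet_cube _ _) fun z _ => abs_of_nonneg (hpos z)
  have havg : ⨍ z in cube (0 : Fin n → ℝ) 1, MvPolynomial.eval z g
      = ((2:ℝ)^n)⁻¹ * Phi n m c := by
    rw [setAverage_eq, smul_eq_mul, measureReal_def, volume_cube_toReal _ (by norm_num : (0:ℝ) ≤ 1), hPhi]
    norm_num
  have havg0 : 0 ≤ ⨍ z in cube (0 : Fin n → ℝ) 1, MvPolynomial.eval z g := by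
    rw [havg]
    have := phi_nonneg (n := n) (m := m) c
    positivity
  have h1 : MvPolynomial.eval y g ≤ card * ‖c‖ := by
    rw [← hrep]
    exact (le_abs_self _).trans (abs_eval_polyOf_le c hy)
  have h2 : card * ‖c‖ ≤ (card / v) * Phi n m c := by
    have hcard0 : (0:ℝ) ≤ card := by positivity
    have := hkey c
    calc card * ‖c‖ = (card / v) * (v * ‖c‖) := by field_simp
    _ ≤ (card / v) * Phi n m c := by
        apply mul_le_mul_of_nonneg_left this (by positivity)
  calc MvPolynomial.eval y g ≤ (card / v) * Phi n m c := h1.trans h2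
  _ = (card * (2:ℝ)^n / v) * (((2:ℝ)^n)⁻¹ * Phi n m c) := by
      have h2n : (0:ℝ) < 2 ^ n := by positivity
      field_simp
  _ = (card * (2:ℝ)^n / v) * ⨍ z in cube (0 : Fin n → ℝ) 1, MvPolynomial.eval z g := by
      rw [havg]
  _ ≤ (max 1 (card * (2:ℝ)^n / v)) * ⨍ z in cube (0 : Fin n → ℝ) 1, MvPolynomial.eval z g := by
      exact mul_le_mul_of_nonneg_right (le_max_right _ _) havg0

lemma core (n m : ℕ) : ∃ C : ℝ, 1 ≤ C ∧ ∀ g : MvPolynomial (Fin n) ℝ, g.totalDegree ≤ m →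
    (∀ y, 0 ≤ MvPolynomial.eval y g) → ∀ (x : Fin n → ℝ) (r : ℝ), 0 < r →
      ∀ y ∈ cube x r, MvPolynomial.eval y g ≤ C * ⨍ z in cube x r, MvPolynomial.eval z g := by
  obtain ⟨C, hC1, hC⟩ := core01 n m
  refine ⟨C, hC1, ?_⟩
  intro g hg hpos x r hr y hy
  set g' : MvPolynomial (Fin n) ℝ := MvPolynomial.bind₁
    (fun i => MvPolynomial.C (x i) + MvPolynomial.C r * MvPolynomial.X i) g with hg'
  have hdeg : g'.totalDegree ≤ m := (totalDegree_comp_affine_le g x r).trans hg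
  have hpos' : ∀ z, 0 ≤ MvPolynomial.eval z g' := fun z => by
    rw [hg', eval_comp_affine]; exact hpos _
  set z : Fin n → ℝ := r⁻¹ • (y - x) with hz
  have hyz : x + r • z = y := by
    funext i
    simp only [hz, Pi.add_apply, Pi.smul_apply, Pi.sub_apply, smul_eq_mul]
    field_simp
    ring
  have hz01 : z ∈ cube (0 : Fin n → ℝ) 1 := by
    rw [← mem_cube_shift x hr z, hyz]
    exact hy
  have := hC g' hdeg hpos' z hz01
  rw [hg', eval_comp_affine, hyz] at this
  refine this.trans ?_
  have : (⨍ w in cube (0 : Fin n → ℝ) 1, MvPolynomial.eval w g')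
      = ⨍ w in cube x r, MvPolynomial.eval w g := by
    rw [setAverage_cube_comp _ x hr]
    congr 1
    funext w
    rw [hg', eval_comp_affine]
  rw [this]


variable {d : ℕ}

def Fro (A : Matrix (Fin d) (Fin d) ℝ) : ℝ := Real.sqrt (∑ i, ∑ j, A i j ^ 2)

lemma Fro_nonneg (A : Matrix (Fin d) (Fin d) ℝ) : 0 ≤ Fro A := Real.sqrt_nonneg _

lemma vnormSq_nonneg (e : Fin d → ℝ) : 0 ≤ vnormSq e :=
  Finset.sum_nonneg fun _ _ => sq_nonneg _

lemma sqrt_vnormSq_eq_norm (w : Fin d → ℝ) :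
    Real.sqrt (vnormSq w) = ‖(WithLp.equiv 2 (Fin d → ℝ)).symm w‖ := by
  rw [EuclideanSpace.norm_eq]
  congr 1
  unfold vnormSq
  refine Finset.sum_congr rfl fun i _ => ?_
  rw [Real.norm_eq_abs, sq_abs]
  rfl

lemma sqrt_vnormSq_add_le (u v : Fin d → ℝ) :
    Real.sqrt (vnormSq (u + v)) ≤ Real.sqrt (vnormSq u) + Real.sqrt (vnormSq v) := by
  rw [sqrt_vnormSq_eq_norm, sqrt_vnormSq_eq_norm, sqrt_vnormSq_eq_norm]
  exact norm_add_le _ _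

lemma sqrt_vnormSq_mulVec_le (A : Matrix (Fin d) (Fin d) ℝ) {e : Fin d → ℝ}
    (he : vnormSq e = 1) : Real.sqrt (vnormSq (A.mulVec e)) ≤ Fro A := by
  unfold Fro
  apply Real.sqrt_le_sqrt
  unfold vnormSq
  simp only [Matrix.mulVec, dotProduct]
  calc ∑ i, (∑ j, A i j * e j) ^ 2 ≤ ∑ i, (∑ j, A i j ^ 2) * (∑ j, e j ^ 2) := by
        apply Finset.sum_le_sum
        intro i _
        exact Finset.sum_mul_sq_le_sq_mul_sq Finset.univ (fun j => A i j) e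
    _ = ∑ i, ∑ j, A i j ^ 2 := by
        have : ∑ j, e j ^ 2 = 1 := he
        simp [this]

def opSet (A : Matrix (Fin d) (Fin d) ℝ) : Set ℝ :=
  {t : ℝ | ∃ e : Fin d → ℝ, vnormSq e = 1 ∧ t = Real.sqrt (vnormSq (A.mulVec e))}

lemma matOpNorm_eq (A : Matrix (Fin d) (Fin d) ℝ) : matOpNorm A = sSup (opSet A) := rfl

lemma unit_vec_vnormSq (hd : 0 < d) : vnormSq (Pi.single (⟨0, hd⟩ : Fin d) (1:ℝ)) = 1 := by
  unfold vnormSq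
  rw [Finset.sum_eq_single (⟨0, hd⟩ : Fin d)]
  · simp
  · intro b _ hb; rw [Pi.single_apply, if_neg hb]; ring
  · simp

lemma opSet_nonempty (hd : 0 < d) (A : Matrix (Fin d) (Fin d) ℝ) : (opSet A).Nonempty :=
  ⟨_, _, unit_vec_vnormSq hd, rfl⟩

lemma opSet_bddAbove (A : Matrix (Fin d) (Fin d) ℝ) : BddAbove (opSet A) := by
  refine ⟨Fro A, fun t ht => ?_⟩
  obtain ⟨e, he, rfl⟩ := ht
  exact sqrt_vnormSq_mulVec_le A he

lemma matOpNorm_nonneg (hd : 0 < d) (A : Matrix (Fin d) (Fin d) ℝ) : 0 ≤ matOpNorm A := by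
  rw [matOpNorm_eq]
  have hm : Real.sqrt (vnormSq (A.mulVec (Pi.single (⟨0, hd⟩ : Fin d) 1))) ∈ opSet A :=
    ⟨_, unit_vec_vnormSq hd, rfl⟩
  exact (Real.sqrt_nonneg _).trans (le_csSup (opSet_bddAbove A) hm)

lemma matOpNorm_le_add_Fro (hd : 0 < d) (A B : Matrix (Fin d) (Fin d) ℝ) :
    matOpNorm A ≤ matOpNorm B + Fro (A - B) := by
  rw [matOpNorm_eq]
  apply csSup_le (opSet_nonempty hd A)
  rintro t ⟨e, he, rfl⟩
  have hsplit : A.mulVec e = B.mulVec e + (A - B).mulVec e := by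
    rw [Matrix.sub_mulVec]
    abel
  calc Real.sqrt (vnormSq (A.mulVec e))
      ≤ Real.sqrt (vnormSq (B.mulVec e)) + Real.sqrt (vnormSq ((A - B).mulVec e)) := by
        rw [hsplit]; exact sqrt_vnormSq_add_le _ _
    _ ≤ matOpNorm B + Fro (A - B) := by
        gcongr
        · exact le_csSup (opSet_bddAbove B) ⟨e, he, rfl⟩
        · exact sqrt_vnormSq_mulVec_le _ he

lemma abs_matOpNorm_sub_le (hd : 0 < d) (A B : Matrix (Fin d) (Fin d) ℝ) :
    |matOpNorm A - matOpNorm B| ≤ Fro (A - B) := by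
  rw [abs_sub_le_iff]
  constructor
  · linarith [matOpNorm_le_add_Fro hd A B]
  · have h := matOpNorm_le_add_Fro hd B A
    have : Fro (B - A) = Fro (A - B) := by
      unfold Fro
      congr 1
      refine Finset.sum_congr rfl fun i _ => Finset.sum_congr rfl fun j _ => ?_
      simp [Matrix.sub_apply]
      ring
    linarith [this ▸ h]

lemma continuous_matOpNorm_comp (hd : 0 < d) {X : Type*} [TopologicalSpace X]
    {M : X → Matrix (Fin d) (Fin d) ℝ} (hM : ∀ i j, Continuous fun y => M y i j) :
    Continuous fun y => matOpNorm (M y) := by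
  rw [continuous_iff_continuousAt]
  intro y₀
  rw [ContinuousAt, tendsto_iff_norm_sub_tendsto_zero]
  have hF : Filter.Tendsto (fun y => Fro (M y - M y₀)) (nhds y₀) (nhds 0) := by
    have hcont : Continuous fun y => Fro (M y - M y₀) := by
      apply Real.continuous_sqrt.comp
      apply continuous_finset_sum
      intro i _
      apply continuous_finset_sum
      intro j _
      exact ((hM i j).sub continuous_const).pow 2
    have h0 : Fro (0 : Matrix (Fin d) (Fin d) ℝ) = 0 := by
      unfold Fro
      simp
    simpa [h0] using hcont.tendsto y₀
  apply squeeze_zero (fun y => norm_nonneg _) (fun y => ?_) hF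
  rw [Real.norm_eq_abs]
  exact abs_matOpNorm_sub_le hd _ _

lemma qf_transpose_mul (V : Matrix (Fin d) (Fin d) ℝ) (e : Fin d → ℝ) :
    qf (V.transpose * V) e = ∑ l, (V.mulVec e l) ^ 2 := by
  unfold qf
  rw [← Matrix.mulVec_mulVec, Matrix.dotProduct_mulVec, Matrix.vecMul_transpose]
  unfold dotProduct
  exact Finset.sum_congr rfl fun l _ => (sq _).symm



lemma qf_eq_sum {d : ℕ} (A : Matrix (Fin d) (Fin d) ℝ) (e : Fin d → ℝ) :
    qf A e = ∑ i, ∑ j, (e i * e j) * A i j := by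
  unfold qf
  simp only [dotProduct, Matrix.mulVec, Finset.mul_sum]
  exact Finset.sum_congr rfl fun i _ => Finset.sum_congr rfl fun j _ => by ring

lemma qf_avg {n d : ℕ} {W : (Fin n → ℝ) → Matrix (Fin d) (Fin d) ℝ}
    (x : Fin n → ℝ) (r : ℝ) (hW : ∀ i j, IntegrableOn (fun y => W y i j) (cube x r))
    (e : Fin d → ℝ) :
    qf (matAvg W (cube x r)) e = ⨍ y in cube x r, qf (W y) e := by
  have hInt : ∀ (i j : Fin d),
      Integrable (fun y => (e i * e j) * W y i j) (volume.restrict (cube x r)) :=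
    fun i j => (hW i j).const_mul _
  have hIntRow : ∀ i : Fin d,
      Integrable (fun y => ∑ j, (e i * e j) * W y i j) (volume.restrict (cube x r)) :=
    fun i => integrable_finset_sum _ fun j _ => hInt i j
  rw [setAverage_eq, smul_eq_mul]
  have hint : ∫ y in cube x r, qf (W y) e
      = ∑ i, ∑ j, (e i * e j) * ∫ y in cube x r, W y i j := by
    calc ∫ y in cube x r, qf (W y) e
        = ∫ y in cube x r, ∑ i, ∑ j, (e i * e j) * W y i j := by
          refine setIntegral_congr_fun (measurableSet_cube _ _) fun y _ => qf_eq_sum _ _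
      _ = ∑ i, ∫ y in cube x r, ∑ j, (e i * e j) * W y i j :=
          integral_finset_sum _ fun i _ => hIntRow i
      _ = ∑ i, ∑ j, ∫ y in cube x r, (e i * e j) * W y i j :=
          Finset.sum_congr rfl fun i _ => integral_finset_sum _ fun j _ => hInt i j
      _ = ∑ i, ∑ j, (e i * e j) * ∫ y in cube x r, W y i j := by
          exact Finset.sum_congr rfl fun i _ => Finset.sum_congr rfl fun j _ =>
            integral_const_mul _ _
  rw [hint, qf_eq_sum]
  simp only [matAvg, Matrix.of_apply, setAverage_eq, smul_eq_mul]
  rw [Finset.mul_sum]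
  refine Finset.sum_congr rfl fun i _ => ?_
  rw [Finset.mul_sum]
  exact Finset.sum_congr rfl fun j _ => by ring

lemma pow_avg_bound {n : ℕ} {f : (Fin n → ℝ) → ℝ} (hf : Continuous f)
    (hpos : ∀ y, 0 ≤ f y) {C : ℝ} (hC : 1 ≤ C) (x : Fin n → ℝ) {r : ℝ} (hr : 0 < r)
    (hbd : ∀ y ∈ cube x r, f y ≤ C * ⨍ z in cube x r, f z) {p : ℝ} (hp : 1 < p) :
    (⨍ y in cube x r, f y ^ p) ^ (1/p) ≤ C * ⨍ y in cube x r, f y := by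
  have hp0 : (0:ℝ) < p := lt_trans one_pos hp
  set a : ℝ := ⨍ z in cube x r, f z with ha
  have hvol : (0:ℝ) < (volume (cube x r)).toReal := by
    rw [volume_cube_toReal _ hr.le]; positivity
  have ha0 : 0 ≤ a := by
    rw [ha, setAverage_eq, smul_eq_mul]
    have : 0 ≤ ∫ z in cube x r, f z :=
      setIntegral_nonneg (measurableSet_cube _ _) fun y _ => hpos y
    positivity
  have hfp_cont : Continuous fun y => f y ^ p := by
    rw [continuous_iff_continuousAt]
    exact fun y₀ => (Real.continuousAt_rpow_const (f y₀) p (Or.inr hp0.le)).comp hf.continuousAt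
  have hintf := integrableOn_cube hf x r
  have hintfp := integrableOn_cube hfp_cont x r
  have havgp_nonneg : 0 ≤ ⨍ y in cube x r, f y ^ p := by
    rw [setAverage_eq, smul_eq_mul]
    have : 0 ≤ ∫ y in cube x r, f y ^ p :=
      setIntegral_nonneg (measurableSet_cube _ _) fun y _ => Real.rpow_nonneg (hpos y) p
    positivity
  rcases eq_or_lt_of_le ha0 with hzero | hapos
  · have hf0 : ∀ y ∈ cube x r, f y = 0 := by
      intro y hy
      refine le_antisymm ?_ (hpos y)
      have := hbd y hy
      rw [← hzero, mul_zero] at this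
      exact this
    have hzint : ∫ y in cube x r, f y ^ p = 0 := by
      rw [setIntegral_congr_fun (measurableSet_cube _ _)
        (g := fun _ => (0:ℝ)) (fun y hy => by rw [hf0 y hy, Real.zero_rpow hp0.ne'])]
      simp
    rw [setAverage_eq, smul_eq_mul, hzint, mul_zero,
      Real.zero_rpow (by positivity : (1:ℝ)/p ≠ 0), ← hzero, mul_zero]
  · have hC0 : (0:ℝ) < C := lt_of_lt_of_le one_pos hC
    have hCa : 0 < C * a := mul_pos hC0 hapos
    have hpt : ∀ y ∈ cube x r, f y ^ p ≤ (C * a) ^ (p - 1) * f y := by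
      intro y hy
      rcases eq_or_lt_of_le (hpos y) with h0 | hposy
      · rw [← h0, Real.zero_rpow hp0.ne', mul_zero]
      · have h1 : f y ^ p = f y ^ (p - 1) * f y := by
          conv_lhs => rw [show p = (p-1) + 1 by ring]
          rw [Real.rpow_add hposy, Real.rpow_one]
        rw [h1]
        apply mul_le_mul_of_nonneg_right _ (hpos y)
        exact Real.rpow_le_rpow (hpos y) (hbd y hy) (by linarith)
    have hint_le : ∫ y in cube x r, f y ^ p ≤ (C*a)^(p-1) * ∫ y in cube x r, f y := by
      calc ∫ y in cube x r, f y ^ p ≤ ∫ y in cube x r, (C*a)^(p-1) * f y :=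
            setIntegral_mono_on hintfp (hintf.const_mul _) (measurableSet_cube _ _) hpt
        _ = (C*a)^(p-1) * ∫ y in cube x r, f y := integral_const_mul _ _
    have haf : a = (volume (cube x r)).toReal⁻¹ * ∫ z in cube x r, f z :=
      ha.trans (by rw [setAverage_eq, smul_eq_mul, measureReal_def])
    have havg_le : (⨍ y in cube x r, f y ^ p) ≤ (C*a)^(p-1) * a := by
      rw [setAverage_eq, smul_eq_mul]
      calc (volume (cube x r)).toReal⁻¹ * ∫ y in cube x r, f y ^ p
          ≤ (volume (cube x r)).toReal⁻¹ * ((C*a)^(p-1) * ∫ y in cube x r, f y) :=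
            mul_le_mul_of_nonneg_left hint_le (by positivity)
        _ = (C*a)^(p-1) * ((volume (cube x r)).toReal⁻¹ * ∫ y in cube x r, f y) := by ring
        _ = (C*a)^(p-1) * a := by rw [← haf]
    calc (⨍ y in cube x r, f y ^ p) ^ ((1:ℝ)/p)
        ≤ ((C*a)^(p-1) * a) ^ ((1:ℝ)/p) :=
          Real.rpow_le_rpow havgp_nonneg havg_le (by positivity)
      _ ≤ ((C*a)^(p-1) * (C*a)) ^ ((1:ℝ)/p) := by
          apply Real.rpow_le_rpow (by positivity) ?_ (by positivity)
          apply mul_le_mul_of_nonneg_left ?_ (Real.rpow_nonneg hCa.le _)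
          nlinarith
      _ = ((C*a) ^ p) ^ ((1:ℝ)/p) := by
          congr 1
          calc (C*a)^(p-1) * (C*a) = (C*a)^(p-1) * (C*a)^(1:ℝ) := by rw [Real.rpow_one]
            _ = (C*a)^((p-1)+1) := (Real.rpow_add hCa _ _).symm
            _ = (C*a)^p := by norm_num
      _ = C * a := by
          rw [← Real.rpow_mul hCa.le, mul_one_div_cancel hp0.ne', Real.rpow_one]


end
end S15

theorem statement15 (n k : ℕ) (hn : 1 ≤ n) :
    ∃ C : ℝ, 0 < C ∧ ∀ (d : ℕ), 1 ≤ d →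
      ∀ P : Fin d → Fin d → MvPolynomial (Fin n) ℝ,
        (∀ i j, (P i j).totalDegree ≤ k) →
        ∀ V : (Fin n → ℝ) → Matrix (Fin d) (Fin d) ℝ,
          (∀ (x : Fin n → ℝ) (i j : Fin d), V x i j = MvPolynomial.eval x (P i j)) →
          ∀ p : ℝ, 1 < p →
            MemBp p C (fun y => (V y).transpose * V y) ∧
            ∀ (x : Fin n → ℝ) (r : ℝ), 0 < r → ∀ e : Fin d → ℝ,
              (⨍ y in cube x r, qf ((V y).transpose * V y) e ^ p) ^ (1 / p)
                ≤ C * ⨍ y in cube x r, qf ((V y).transpose * V y) e := by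
  obtain ⟨C, hC1, hC⟩ := S15.core n (2*k)
  refine ⟨C, lt_of_lt_of_le one_pos hC1, ?_⟩
  intro d hd P hP V hV p hp
  have hd0 : 0 < d := hd
  have hp0 : (0:ℝ) < p := lt_trans one_pos hp
  have hVc : ∀ i j, Continuous fun y => V y i j := by
    intro i j
    have : (fun y => V y i j) = fun y => MvPolynomial.eval y (P i j) :=
      funext fun y => hV y i j
    rw [this]
    exact S15.continuous_evalP _
  have hWc : ∀ i j, Continuous fun y => ((V y).transpose * V y) i j := by
    intro i j
    have : (fun y => ((V y).transpose * V y) i j) = fun y => ∑ l, V y l i * V y l j := by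
      funext y
      simp [Matrix.mul_apply, Matrix.transpose_apply]
    rw [this]
    exact continuous_finset_sum _ fun l _ => (hVc l i).mul (hVc l j)
  have hqfpos : ∀ (y : Fin n → ℝ) (e : Fin d → ℝ), 0 ≤ qf ((V y).transpose * V y) e := by
    intro y e
    rw [S15.qf_transpose_mul]
    positivity
  have hqfpoly : ∀ e : Fin d → ℝ, ∃ G : MvPolynomial (Fin n) ℝ, G.totalDegree ≤ 2*k ∧
      ∀ y, MvPolynomial.eval y G = qf ((V y).transpose * V y) e := by
    intro e
    refine ⟨∑ l, (∑ j, P l j * MvPolynomial.C (e j))^2, ?_, ?_⟩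
    · apply MvPolynomial.totalDegree_finsetSum_le
      intro l _
      refine (MvPolynomial.totalDegree_pow _ _).trans ?_
      have hin : (∑ j, P l j * MvPolynomial.C (e j)).totalDegree ≤ k :=
        MvPolynomial.totalDegree_finsetSum_le fun j _ =>
          (MvPolynomial.totalDegree_mul _ _).trans
            (by simpa [MvPolynomial.totalDegree_C] using hP l j)
      omega
    · intro y
      rw [S15.qf_transpose_mul, map_sum]
      refine Finset.sum_congr rfl fun l _ => ?_
      rw [map_pow, map_sum]
      congr 1
      simp only [Matrix.mulVec, dotProduct]
      refine Finset.sum_congr rfl fun j _ => ?_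
      simp [hV]
  have main : ∀ (x : Fin n → ℝ) (r : ℝ), 0 < r → ∀ e : Fin d → ℝ,
      (⨍ y in cube x r, qf ((V y).transpose * V y) e ^ p) ^ (1 / p)
        ≤ C * ⨍ y in cube x r, qf ((V y).transpose * V y) e := by
    intro x r hr e
    obtain ⟨G, hGdeg, hGeval⟩ := hqfpoly e
    have hfc : Continuous fun y => qf ((V y).transpose * V y) e := by
      have : (fun y => qf ((V y).transpose * V y) e) = fun y => MvPolynomial.eval y G :=
        funext fun y => (hGeval y).symm
      rw [this]
      exact S15.continuous_evalP _
    have hbd : ∀ y ∈ cube x r, qf ((V y).transpose * V y) e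
        ≤ C * ⨍ z in cube x r, qf ((V z).transpose * V z) e := by
      intro y hy
      have := hC G hGdeg (fun w => by rw [hGeval]; exact hqfpos w e) x r hr y hy
      simp_rw [hGeval] at this
      exact this
    exact S15.pow_avg_bound hfc (fun y => hqfpos y e) hC1 x hr hbd hp
  refine ⟨⟨?_, ?_⟩, fun x r hr e => main x r hr e⟩
  · intro x r hr
    have hcont : Continuous fun y => matOpNorm ((V y).transpose * V y) :=
      S15.continuous_matOpNorm_comp hd0 hWc
    have hcont2 : Continuous fun y => matOpNorm ((V y).transpose * V y) ^ p := by
      rw [continuous_iff_continuousAt]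
      exact fun y₀ => (Real.continuousAt_rpow_const _ p (Or.inr hp0.le)).comp hcont.continuousAt
    exact S15.integrableOn_cube hcont2 x r
  · intro x r hr e
    rw [S15.qf_avg x r (fun i j => S15.integrableOn_cube (hWc i j) x r) e]
    exact main x r hr e
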